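/- Let r ≥ 2, t ≥ 1, and let 𝓕 be a shifted r-wise t-intersecting family of k-element subsets of [n]. Then for every F ∈ 𝓕 there exists an integer i ≥ 0 such that |F ∩ [t + r·i]| ≥ t + (r−1)·i. -/

import Mathlib

/-- A family `𝓕` is `r`-wise `t`-intersecting if any `r` (not necessarily distinct)
members have at least `t` common elements. -/
def RwiseIntersecting (r t : ℕ) (𝓕 : Finset (Finset ℕ)) : Prop :=
  ∀ G : Fin r → Finset ℕ, (∀ i, G i ∈ 𝓕) → t ≤ (⋂ i, ((G i : Finset ℕ) : Set ℕ)).ncard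

/-- A family of subsets of `[n]` is shifted if for every `F` in the family and all
`1 ≤ i < j ≤ n` with `j ∈ F`, `i ∉ F`, the set `(F \ {j}) ∪ {i}` is also in the family. -/
def Shifted (n : ℕ) (𝓕 : Finset (Finset ℕ)) : Prop :=
  ∀ F ∈ 𝓕, ∀ i j : ℕ, 1 ≤ i → i < j → j ≤ n → j ∈ F → i ∉ F →
    insert i (F.erase j) ∈ 𝓕

lemma multishift (n : ℕ) (𝓕 : Finset (Finset ℕ)) (hsh : Shifted n 𝓕)
    (F : Finset ℕ) (hF : F ∈ 𝓕) (hFn : ∀ x ∈ F, 1 ≤ x ∧ x ≤ n)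
    (e c : ℕ → ℕ) (J : Finset ℕ)
    (he : ∀ j ∈ J, e j ∈ F)
    (hei : ∀ j ∈ J, ∀ j' ∈ J, e j = e j' → j = j')
    (hc : ∀ j ∈ J, c j ∉ F ∧ 1 ≤ c j ∧ c j < e j)
    (hci : ∀ j ∈ J, ∀ j' ∈ J, c j = c j' → j = j') :
    (F \ J.image e) ∪ J.image c ∈ 𝓕 := by
  induction J using Finset.induction_on with
  | empty => simpa using hF
  | @insert a J ha ih =>
    have hG : (F \ J.image e) ∪ J.image c ∈ 𝓕 := by
      apply ih
      · intro j hj; exact he j (Finset.mem_insert_of_mem hj)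
      · intro j hj j' hj'
        exact hei j (Finset.mem_insert_of_mem hj) j' (Finset.mem_insert_of_mem hj')
      · intro j hj; exact hc j (Finset.mem_insert_of_mem hj)
      · intro j hj j' hj'
        exact hci j (Finset.mem_insert_of_mem hj) j' (Finset.mem_insert_of_mem hj')
    set G := (F \ J.image e) ∪ J.image c with hGdef
    have haI : a ∈ insert a J := Finset.mem_insert_self a J
    have heaF : e a ∈ F := he a haI
    have hcaF : c a ∉ F := (hc a haI).1
    have heaG : e a ∈ G := by
      rw [hGdef]
      apply Finset.mem_union_left
      rw [Finset.mem_sdiff]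
      refine ⟨heaF, ?_⟩
      intro hmem
      obtain ⟨j, hj, hje⟩ := Finset.mem_image.mp hmem
      have := hei j (Finset.mem_insert_of_mem hj) a haI hje
      exact ha (this ▸ hj)
    have hcaG : c a ∉ G := by
      rw [hGdef]
      intro hmem
      rcases Finset.mem_union.mp hmem with h | h
      · exact hcaF (Finset.mem_sdiff.mp h).1
      · obtain ⟨j, hj, hje⟩ := Finset.mem_image.mp h
        have := hci j (Finset.mem_insert_of_mem hj) a haI hje
        exact ha (this ▸ hj)
    have key : insert (c a) (G.erase (e a)) ∈ 𝓕 :=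
      hsh G hG (c a) (e a) (hc a haI).2.1 (hc a haI).2.2 (hFn _ heaF).2 heaG hcaG
    have heq : insert (c a) (G.erase (e a)) =
        (F \ (insert a J).image e) ∪ (insert a J).image c := by
      ext x
      simp only [hGdef, Finset.image_insert, Finset.mem_insert, Finset.mem_erase,
        Finset.mem_union, Finset.mem_sdiff, Finset.mem_image]
      have h1 : (∃ j ∈ J, c j = x) → x ∉ F := by
        rintro ⟨j, hj, rfl⟩; exact (hc j (Finset.mem_insert_of_mem hj)).1
      have h2 : x = e a → x ∈ F := fun h => h ▸ heaF
      have h3 : x = c a → x ∉ F := fun h => h ▸ hcaF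
      constructor
      · rintro (h | ⟨hne, (⟨hF', hne'⟩ | hx)⟩)
        · exact Or.inr (Or.inl h)
        · exact Or.inl ⟨hF', fun h => h.elim hne hne'⟩
        · exact Or.inr (Or.inr hx)
      · rintro (⟨hF', hne⟩ | h | hx)
        · exact Or.inr ⟨fun h => hne (Or.inl h), Or.inl ⟨hF', fun h' => hne (Or.inr h')⟩⟩
        · exact Or.inl h
        · exact Or.inr ⟨fun he' => h1 hx (h2 he'), Or.inr hx⟩
    rwa [heq] at key

theorem shifted_rwise_intersecting_hits_line
    (n k r t : ℕ) (hr : 2 ≤ r) (ht : 1 ≤ t)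
    (𝓕 : Finset (Finset ℕ))
    (h𝓕 : 𝓕 ⊆ Finset.powersetCard k (Finset.Icc 1 n))
    (hsh : Shifted n 𝓕)
    (hint : RwiseIntersecting r t 𝓕) :
    ∀ F ∈ 𝓕, ∃ i : ℕ, t + (r - 1) * i ≤ (F ∩ Finset.Icc 1 (t + r * i)).card := by
  intro F hF
  by_contra hcon
  push_neg at hcon
  obtain ⟨hFsub, hFcard⟩ := Finset.mem_powersetCard.mp (h𝓕 hF)
  have hFn : ∀ x ∈ F, 1 ≤ x ∧ x ≤ n := fun x hx => Finset.mem_Icc.mp (hFsub hx)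
  set q := r - 1 with hq
  have hq1 : 1 ≤ q := by omega
  -- enumeration of F
  set emb := F.orderEmbOfFin hFcard with hembdef
  set e : ℕ → ℕ := fun j => if h : j < k then emb ⟨j, h⟩ else 0 with hedef
  have heF : ∀ j, j < k → e j ∈ F := by
    intro j hj
    simp only [hedef, dif_pos hj]
    exact Finset.orderEmbOfFin_mem F hFcard ⟨j, hj⟩
  have hemono : ∀ j j', j ≤ j' → j' < k → e j ≤ e j' := by
    intro j j' hle hj'
    have hj : j < k := lt_of_le_of_lt hle hj'
    simp only [hedef, dif_pos hj, dif_pos hj']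
    exact emb.monotone (by exact_mod_cast hle)
  have hestrict : ∀ j j', j < j' → j' < k → e j < e j' := by
    intro j j' hlt hj'
    have hj : j < k := lt_trans hlt hj'
    simp only [hedef, dif_pos hj, dif_pos hj']
    exact emb.strictMono (by exact_mod_cast hlt)
  have heinj : ∀ j, j < k → ∀ j', j' < k → e j = e j' → j = j' := by
    intro j hj j' hj' hee
    by_contra hne
    rcases Nat.lt_or_ge j j' with h | h
    · exact absurd hee (ne_of_lt (hestrict j j' h hj'))
    · have : j' < j := by omega
      exact absurd hee.symm (ne_of_lt (hestrict j' j this hj))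
  have hFeq : F = (Finset.range k).image e := by
    ext x
    simp only [Finset.mem_image, Finset.mem_range]
    constructor
    · intro hx
      have : x ∈ Set.range emb := by
        rw [hembdef, Finset.range_orderEmbOfFin]
        exact_mod_cast hx
      obtain ⟨i, hi⟩ := this
      exact ⟨i, i.isLt, by simp only [hedef, dif_pos i.isLt, Fin.eta]; exact hi⟩
    · rintro ⟨j, hj, rfl⟩
      exact heF j hj
  -- counting lower bound
  have hcount : ∀ p T, p < k → e p ≤ T → p + 1 ≤ (F ∩ Finset.Icc 1 T).card := by
    intro p T hp hpT
    have hsub : (Finset.range (p + 1)).image e ⊆ F ∩ Finset.Icc 1 T := by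
      intro x hx
      obtain ⟨j, hj, rfl⟩ := Finset.mem_image.mp hx
      have hjp : j ≤ p := by simpa using Nat.lt_succ_iff.mp (Finset.mem_range.mp hj)
      have hjk : j < k := lt_of_le_of_lt hjp hp
      refine Finset.mem_inter.mpr ⟨heF j hjk, Finset.mem_Icc.mpr ⟨(hFn _ (heF j hjk)).1, ?_⟩⟩
      exact le_trans (hemono j p hjp hp) hpT
    have hcardimg : ((Finset.range (p + 1)).image e).card = p + 1 := by
      rw [Finset.card_image_of_injOn, Finset.card_range]
      intro a ha b hb hab
      exact heinj a (lt_of_lt_of_le (Finset.mem_range.mp ha) hp) b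
        (lt_of_lt_of_le (Finset.mem_range.mp hb) hp) hab
    calc p + 1 = ((Finset.range (p + 1)).image e).card := hcardimg.symm
      _ ≤ (F ∩ Finset.Icc 1 T).card := Finset.card_le_card hsub
  have hbig : ∀ m, t - 1 + q * m < k → t + r * m < e (t - 1 + q * m) := by
    intro m hm
    by_contra h
    push_neg at h
    have h1 := hcount (t - 1 + q * m) (t + r * m) hm h
    have h2 := hcon m
    omega
  -- the complement set D and its enumeration
  set T := t + r * k with hT
  set D := Finset.Icc 1 T \ F with hD
  have hDk : k ≤ D.card := by
    have h1 : D.card + (Finset.Icc 1 T ∩ F).card = (Finset.Icc 1 T).card := by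
      rw [hD]; exact Finset.card_sdiff_add_card_inter _ _
    have h2 : (Finset.Icc 1 T ∩ F).card ≤ k := by
      rw [← hFcard]; exact Finset.card_le_card (Finset.inter_subset_right)
    have h3 : (Finset.Icc 1 T).card = T := by rw [Nat.card_Icc]; omega
    have h4 : 2 * k ≤ r * k := Nat.mul_le_mul_right k hr
    omega
  set embD := D.orderEmbOfFin rfl with hembD
  set c : ℕ → ℕ := fun m => if h : m < D.card then embD ⟨m, h⟩ else 0 with hcdef
  have hcD : ∀ m, m < D.card → c m ∈ D := by
    intro m hm
    simp only [hcdef, dif_pos hm]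
    exact Finset.orderEmbOfFin_mem D rfl ⟨m, hm⟩
  have hcnotF : ∀ m, m < D.card → c m ∉ F := by
    intro m hm
    exact (Finset.mem_sdiff.mp (hcD m hm)).2
  have hc1 : ∀ m, m < D.card → 1 ≤ c m := by
    intro m hm
    exact (Finset.mem_Icc.mp (Finset.mem_sdiff.mp (hcD m hm)).1).1
  have hcstrict : ∀ m m', m < m' → m' < D.card → c m < c m' := by
    intro m m' hlt hm'
    have hm : m < D.card := lt_trans hlt hm'
    simp only [hcdef, dif_pos hm, dif_pos hm']
    exact embD.strictMono (by exact_mod_cast hlt)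
  have hcle : ∀ m, m < k → c m ≤ t + r * m := by
    intro m hm
    by_contra h
    push_neg at h
    set A := Finset.Icc 1 (t + r * m) \ F with hA
    have hAcard : m + 1 ≤ A.card := by
      have h1 : A.card + (Finset.Icc 1 (t + r * m) ∩ F).card
          = (Finset.Icc 1 (t + r * m)).card := by
        rw [hA]; exact Finset.card_sdiff_add_card_inter _ _
      have h3 : (Finset.Icc 1 (t + r * m)).card = t + r * m := by rw [Nat.card_Icc]; omega
      have h2 := hcon m
      rw [Finset.inter_comm] at h1
      have h5 : q * m + m = r * m := by
        rw [hq, Nat.sub_one_mul]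
        have : m ≤ r * m := Nat.le_mul_of_pos_left m (by omega)
        omega
      omega
    have hAsub : A ⊆ (Finset.range m).image c := by
      intro a ha
      have haD : a ∈ D := by
        rw [hD]
        rw [hA, Finset.mem_sdiff, Finset.mem_Icc] at ha
        have hrm : r * m ≤ r * k := Nat.mul_le_mul_left r (le_of_lt hm)
        exact Finset.mem_sdiff.mpr ⟨Finset.mem_Icc.mpr ⟨ha.1.1, by omega⟩, ha.2⟩
      have : a ∈ Set.range embD := by
        rw [hembD, Finset.range_orderEmbOfFin]
        exact_mod_cast haD
      obtain ⟨i, hi⟩ := this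
      have hia : c (i : ℕ) = a := by
        simp only [hcdef, dif_pos i.isLt, Fin.eta]; exact hi
      have ham : a ≤ t + r * m := by
        rw [hA, Finset.mem_sdiff, Finset.mem_Icc] at ha
        exact ha.1.2
      have him : (i : ℕ) < m := by
        by_contra hge
        push_neg at hge
        rcases Nat.eq_or_lt_of_le hge with heq | hlt
        · have hca : c m = a := by rw [heq]; exact hia
          omega
        · have := hcstrict m i hlt i.isLt
          omega
      exact Finset.mem_image.mpr ⟨i, Finset.mem_range.mpr him, hia⟩
    have : A.card ≤ m := le_trans (Finset.card_le_card hAsub)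
      (le_trans Finset.card_image_le (le_of_eq (Finset.card_range m)))
    omega
  -- the shifted copies
  set cf : ℕ → ℕ := fun j => c ((j - (t - 1)) / q) with hcf
  set Js : ℕ → Finset ℕ :=
    fun s => (Finset.range k).filter (fun j => t - 1 ≤ j ∧ (j - (t - 1)) % q = s) with hJs
  have hJmem : ∀ s j, j ∈ Js s → j < k ∧ t - 1 ≤ j ∧ (j - (t - 1)) % q = s := by
    intro s j hj
    rw [hJs, Finset.mem_filter, Finset.mem_range] at hj
    exact ⟨hj.1, hj.2.1, hj.2.2⟩
  have hcfgood : ∀ s, ∀ j ∈ Js s, cf j ∉ F ∧ 1 ≤ cf j ∧ cf j < e j := by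
    intro s j hj
    obtain ⟨hjk, hjt, hjs⟩ := hJmem s j hj
    set m := (j - (t - 1)) / q with hm
    have hmk : m < k := lt_of_le_of_lt (le_trans (Nat.div_le_self _ _) (Nat.sub_le _ _)) hjk
    have hmD : m < D.card := lt_of_lt_of_le hmk hDk
    have hple : t - 1 + q * m ≤ j := by
      have h0 : (j - (t - 1)) / q * q ≤ j - (t - 1) := Nat.div_mul_le_self _ _
      rw [← hm] at h0
      have h0' : q * m = m * q := Nat.mul_comm q m
      omega
    have hpk : t - 1 + q * m < k := lt_of_le_of_lt hple hjk
    have hlt : cf j < e j := by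
      have h1 : c m ≤ t + r * m := hcle m hmk
      have h2 : t + r * m < e (t - 1 + q * m) := hbig m hpk
      have h3 : e (t - 1 + q * m) ≤ e j := hemono _ _ hple hjk
      have h4 : cf j = c m := by simp only [hcf]; rfl
      omega
    exact ⟨hcnotF m hmD, hc1 m hmD, hlt⟩
  have hcfinj : ∀ s, ∀ j ∈ Js s, ∀ j' ∈ Js s, cf j = cf j' → j = j' := by
    intro s j hj j' hj' hcc
    obtain ⟨hjk, hjt, hjs⟩ := hJmem s j hj
    obtain ⟨hjk', hjt', hjs'⟩ := hJmem s j' hj'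
    set m := (j - (t - 1)) / q with hm
    set m' := (j' - (t - 1)) / q with hm'
    have hmk : m < k := lt_of_le_of_lt (le_trans (Nat.div_le_self _ _) (Nat.sub_le _ _)) hjk
    have hmk' : m' < k := lt_of_le_of_lt (le_trans (Nat.div_le_self _ _) (Nat.sub_le _ _)) hjk'
    have hcc' : c m = c m' := by
      have e1 : cf j = c m := by simp only [hcf]; rfl
      have e2 : cf j' = c m' := by simp only [hcf]; rfl
      rw [e1, e2] at hcc
      exact hcc
    have hmm : m = m' := by
      by_contra hne
      rcases Nat.lt_or_ge m m' with h | h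
      · exact absurd hcc' (ne_of_lt (hcstrict m m' h (lt_of_lt_of_le hmk' hDk)))
      · have hlt : m' < m := by omega
        exact absurd hcc'.symm (ne_of_lt (hcstrict m' m hlt (lt_of_lt_of_le hmk hDk)))
    have d1 : q * m + s = j - (t - 1) := by
      rw [hm, ← hjs]; exact Nat.div_add_mod _ _
    have d2 : q * m' + s = j' - (t - 1) := by
      rw [hm', ← hjs']; exact Nat.div_add_mod _ _
    have d3 : q * m = q * m' := by rw [hmm]
    omega
  -- each shifted copy is in the family
  have hFs : ∀ s, (F \ (Js s).image e) ∪ (Js s).image cf ∈ 𝓕 := by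
    intro s
    apply multishift n 𝓕 hsh F hF hFn e cf (Js s)
    · intro j hj; exact heF j (hJmem s j hj).1
    · intro j hj j' hj'
      exact heinj j (hJmem s j hj).1 j' (hJmem s j' hj').1
    · exact hcfgood s
    · exact hcfinj s
  -- the r sets
  set G : Fin r → Finset ℕ := fun i =>
    if (i : ℕ) = 0 then F
    else (F \ (Js ((i : ℕ) - 1)).image e) ∪ (Js ((i : ℕ) - 1)).image cf with hGdef
  have hGmem : ∀ i, G i ∈ 𝓕 := by
    intro i
    simp only [hGdef]
    split
    · exact hF
    · exact hFs _
  have hsub : (⋂ i, ((G i : Finset ℕ) : Set ℕ)) ⊆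
      (((Finset.range (t - 1)).image e : Finset ℕ) : Set ℕ) := by
    intro y hy
    simp only [Set.mem_iInter] at hy
    have hyF : y ∈ F := by
      have h0 := hy ⟨0, by omega⟩
      simp only [hGdef] at h0
      norm_num at h0
      exact h0
    obtain ⟨j, hjk, hje⟩ : ∃ j, j < k ∧ e j = y := by
      rw [hFeq] at hyF
      obtain ⟨j, hj, hje⟩ := Finset.mem_image.mp hyF
      exact ⟨j, Finset.mem_range.mp hj, hje⟩
    rcases Nat.lt_or_ge j (t - 1) with hjlt | hjge
    · simp only [Finset.coe_image, Set.mem_image, Finset.mem_coe, Finset.mem_range]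
      exact ⟨j, by simpa using hjlt, hje⟩
    · exfalso
      set s := (j - (t - 1)) % q with hs
      have hsq : s < q := Nat.mod_lt _ (by omega)
      have hjJ : j ∈ Js s := by
        rw [hJs, Finset.mem_filter, Finset.mem_range]
        exact ⟨hjk, hjge, rfl⟩
      have hi := hy ⟨s + 1, by omega⟩
      simp only [hGdef] at hi
      norm_num at hi
      rcases hi with ⟨hyF2, hno⟩ | ⟨j', hj', hje'⟩
      · exact hno j hjJ hje
      · have hni := (hcfgood s j' hj').1
        rw [hje'] at hni
        exact hni hyF
  have hbound := hint G hGmem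
  have hfin : (((Finset.range (t - 1)).image e : Finset ℕ) : Set ℕ).Finite :=
    Finset.finite_toSet _
  have h1 : (⋂ i, ((G i : Finset ℕ) : Set ℕ)).ncard ≤
      (((Finset.range (t - 1)).image e : Finset ℕ) : Set ℕ).ncard :=
    Set.ncard_le_ncard hsub hfin
  have h2 : (((Finset.range (t - 1)).image e : Finset ℕ) : Set ℕ).ncard ≤ t - 1 := by
    rw [Set.ncard_coe_finset]
    exact le_trans Finset.card_image_le (le_of_eq (Finset.card_range _))
  omega
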